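/- Suppose n ≥ 2, T ∈ L(H), M and N are closed invariant subspaces of T with M ⊆ N; write H = M ⊕ (N ⊖ M) ⊕ N^⊥. Suppose h_1,...,h_n ∈ M, u_1,...,u_n ∈ N ⊖ M, v_2,...,v_n ∈ N^⊥ satisfy: (a) the T-cyclic subspace generated by h_1 ⊕ u_1 ⊕ 0 equals N, and (b) the T-invariant subspace generated by h_1 ⊕ u_1 ⊕ 0 together with h_k ⊕ u_k ⊕ v_k (k = 2,...,n) equals H. Then for every h_0 ∈ M, the T-invariant subspace generated by h_0 ⊕ u_1 ⊕ v_2 together with (h_0 − h_1) ⊕ 0 ⊕ v_k (k = 2,...,n) equals H. -/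

import Mathlib

/- STATEMENT 6 (Lemma on cyclic vectors): Suppose `n ≥ 2`, `T ∈ L(H)`, `M ⊆ N` closed
invariant subspaces, `h_k ∈ M`, `u_k ∈ N ⊖ M`, `v_k ∈ N^⊥` with
(a) `E_T(h₁ ⊕ u₁ ⊕ 0) = N` and
(b) `E_T(h₁ ⊕ u₁ ⊕ 0, h_k ⊕ u_k ⊕ v_k (k=2..n)) = H`.
Then for every `h₀ ∈ M`,
`E_T(h₀ ⊕ u₁ ⊕ v₂, (h₀ − h₁) ⊕ 0 ⊕ v_k (k=2..n)) = H`. -/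

noncomputable section
namespace Paper

variable {H : Type} [NormedAddCommGroup H] [InnerProductSpace ℂ H] [CompleteSpace H]

/-- The smallest closed `T`-invariant subspace containing all the `x i`. -/
def orbitClosure (T : H →L[ℂ] H) {ι : Type} (x : ι → H) : Submodule ℂ H :=
  (Submodule.span ℂ {y | ∃ (i : ι) (j : ℕ), y = (T ^ j) (x i)}).topologicalClosure

lemma mem_orbitClosure (T : H →L[ℂ] H) {ι : Type} (x : ι → H) (i : ι) :
    x i ∈ orbitClosure T x :=
  Submodule.le_topologicalClosure _ (Submodule.subset_span ⟨i, 0, by simp⟩)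

lemma orbitClosure_isClosed (T : H →L[ℂ] H) {ι : Type} (x : ι → H) :
    IsClosed ((orbitClosure T x : Submodule ℂ H) : Set H) :=
  Submodule.isClosed_topologicalClosure _

lemma orbitClosure_le (T : H →L[ℂ] H) {ι : Type} (x : ι → H) (S : Submodule ℂ H)
    (hS : IsClosed (S : Set H)) (hinv : ∀ y ∈ S, T y ∈ S) (hx : ∀ i, x i ∈ S) :
    orbitClosure T x ≤ S := by
  apply Submodule.topologicalClosure_minimal _ _ hS
  apply Submodule.span_le.2
  rintro y ⟨i, j, rfl⟩
  induction j with
  | zero => simpa using hx i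
  | succ j ih =>
      have : (T ^ (j + 1)) (x i) = T ((T ^ j) (x i)) := by
        rw [pow_succ']; rfl
      rw [this]
      exact hinv _ ih

lemma orbitClosure_invariant (T : H →L[ℂ] H) {ι : Type} (x : ι → H) :
    ∀ y ∈ orbitClosure T x, T y ∈ orbitClosure T x := by
  intro y hy
  set s : Set H := {y | ∃ (i : ι) (j : ℕ), y = (T ^ j) (x i)} with hs
  have hspan : ∀ z ∈ Submodule.span ℂ s, T z ∈ Submodule.span ℂ s := by
    intro z hz
    have h1 : T z ∈ Submodule.map (T : H →ₗ[ℂ] H) (Submodule.span ℂ s) := ⟨z, hz, rfl⟩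
    rw [Submodule.map_span] at h1
    refine Submodule.span_mono ?_ h1
    rintro _ ⟨w, ⟨i, j, rfl⟩, rfl⟩
    refine ⟨i, j + 1, ?_⟩
    rw [pow_succ']; rfl
  have hy' : y ∈ closure ((Submodule.span ℂ s : Submodule ℂ H) : Set H) := hy
  have := map_mem_closure T.continuous hy' (fun z hz => hspan z hz)
  exact this

theorem statement6 (n : ℕ) (hn : 2 ≤ n) (T : H →L[ℂ] H)
    (M N : Submodule ℂ H) (hMc : IsClosed (M : Set H)) (hNc : IsClosed (N : Set H))
    (hMN : M ≤ N)
    (hMinv : ∀ x ∈ M, T x ∈ M) (hNinv : ∀ x ∈ N, T x ∈ N)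
    (h u v : Fin n → H)
    (hh : ∀ k, h k ∈ M) (hu : ∀ k, u k ∈ N ⊓ Mᗮ) (hv : ∀ k, v k ∈ Nᗮ)
    (ha : orbitClosure T (fun _ : Fin 1 => h ⟨0, by omega⟩ + u ⟨0, by omega⟩) = N)
    (hb : orbitClosure T
        (fun k : Fin n => if k = ⟨0, by omega⟩ then h ⟨0, by omega⟩ + u ⟨0, by omega⟩
          else h k + u k + v k) = ⊤)
    (h₀ : H) (hh₀ : h₀ ∈ M) :
    orbitClosure T
        (fun k : Fin n => if k = ⟨0, by omega⟩ then h₀ + u ⟨0, by omega⟩ + v ⟨1, by omega⟩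
          else (h₀ - h ⟨0, by omega⟩) + v k) = ⊤ := by
  have hn0 : 0 < n := by omega
  have hn1 : 1 < n := by omega
  set i0 : Fin n := ⟨0, hn0⟩ with hi0
  set i1 : Fin n := ⟨1, hn1⟩ with hi1
  set g : Fin n → H := fun k : Fin n =>
      if k = ⟨0, by omega⟩ then h₀ + u ⟨0, by omega⟩ + v ⟨1, by omega⟩
      else (h₀ - h ⟨0, by omega⟩) + v k with hgdef
  set E := orbitClosure T g with hE
  have hEc : IsClosed (E : Set H) := orbitClosure_isClosed T g
  have hEinv : ∀ y ∈ E, T y ∈ E := orbitClosure_invariant T g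
  have hne : i1 ≠ i0 := by simp [hi0, hi1, Fin.ext_iff]
  have hg0 : h₀ + u i0 + v i1 ∈ E := by
    have := mem_orbitClosure T g i0
    simpa [hgdef, hi0, hi1] using this
  have hg1 : (h₀ - h i0) + v i1 ∈ E := by
    have := mem_orbitClosure T g i1
    simpa [hgdef, hne, hi0, hi1] using this
  have hhu : h i0 + u i0 ∈ E := by
    have hsub := E.sub_mem hg0 hg1
    have : (h₀ + u i0 + v i1) - ((h₀ - h i0) + v i1) = h i0 + u i0 := by abel
    rwa [this] at hsub
  have hNE : N ≤ E := by
    rw [← ha]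
    exact orbitClosure_le T _ E hEc hEinv (fun _ => hhu)
  have hh0E : h₀ ∈ E := hNE (hMN hh₀)
  have hhE : h i0 ∈ E := hNE (hMN (hh i0))
  have hvE : ∀ k, k ≠ i0 → v k ∈ E := by
    intro k hk
    have hk' : (h₀ - h i0) + v k ∈ E := by
      have := mem_orbitClosure T g k
      simpa [hgdef, show k ≠ ⟨0, hn0⟩ from hk, hi0, hi1] using this
    have heq : v k = ((h₀ - h i0) + v k) - h₀ + h i0 := by abel
    rw [heq]
    exact E.add_mem (E.sub_mem hk' hh0E) hhE
  rw [eq_top_iff, ← hb]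
  apply orbitClosure_le T _ E hEc hEinv
  intro k
  by_cases hk : k = i0
  · subst hk
    simpa [hi0] using hhu
  · have : (if k = (⟨0, by omega⟩ : Fin n) then h ⟨0, by omega⟩ + u ⟨0, by omega⟩
        else h k + u k + v k) = h k + u k + v k := by simp [show k ≠ ⟨0, hn0⟩ from hk, hi0]
    rw [this]
    exact E.add_mem (E.add_mem (hNE (hMN (hh k))) (hNE (hu k).1)) (hvE k hk)

end Paper
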